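/- Let t0 be a real constant and h_bl : I → ℝ continuous on an open interval I on which t + t0 > 0. Suppose R, U, V, h : I → ℝ are differentiable and satisfy R'(t) = U(t), h'(t) = −(2/(t+t0))·(h(t) − h_bl(t)), and V'(t) = 2π·R(t)·h(t)·(ū(t) − U(t)), where ū(t) = (R(t)/(t+t0))·(1 − h_bl(t)/h(t)) and h(t) ≠ 0 on I. Then the total volume V(t) + π·R(t)²·h(t) is constant on I. -/

import Mathlib

open Real

/-- In the rim-lamella model, if `R' = U`,
`h' = −(2/(t+t0))·(h − h_bl)` and `V' = 2πRh·(ū − U)` with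
`ū = (R/(t+t0))·(1 − h_bl/h)` on an open interval `I` where `t + t0 > 0` and `h ≠ 0`,
then the total volume `V + πR²h` is constant on `I`. -/
theorem total_volume_conserved
    (t0 A B : ℝ) (h_bl : ℝ → ℝ) (hbl_cont : Continuous h_bl)
    (hpos : ∀ t ∈ Set.Ioo A B, t + t0 > 0)
    (R U V h : ℝ → ℝ)
    (hne : ∀ t ∈ Set.Ioo A B, h t ≠ 0)
    (hR : ∀ t ∈ Set.Ioo A B, HasDerivAt R (U t) t)
    (hh : ∀ t ∈ Set.Ioo A B, HasDerivAt h (-(2 / (t + t0)) * (h t - h_bl t)) t)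
    (hV : ∀ t ∈ Set.Ioo A B,
      HasDerivAt V
        (2 * π * R t * h t * ((R t / (t + t0)) * (1 - h_bl t / h t) - U t)) t) :
    ∀ s ∈ Set.Ioo A B, ∀ t ∈ Set.Ioo A B,
      V s + π * R s ^ 2 * h s = V t + π * R t ^ 2 * h t := by
  intro s hs t ht
  have key : ∀ x ∈ Set.Ioo A B,
      HasDerivAt (fun τ => V τ + π * R τ ^ 2 * h τ) 0 x := by
    intro x hx
    have h1 : HasDerivAt (fun τ => V τ + π * R τ ^ 2 * h τ) _ x := (hV x hx).add
      ((((hR x hx).pow 2).const_mul π).mul (hh x hx))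
    convert h1 using 1
    have hx0 : x + t0 ≠ 0 := ne_of_gt (hpos x hx)
    have hhx : h x ≠ 0 := hne x hx
    simp only [Pi.pow_apply]
    field_simp
    ring
  have hconv : Convex ℝ (Set.Ioo A B) := convex_Ioo A B
  have := hconv.norm_image_sub_le_of_norm_hasDerivWithin_le
    (f' := fun _ => (0 : ℝ)) (C := 0)
    (fun x hx => (key x hx).hasDerivWithinAt)
    (fun x hx => by simp) ht hs
  have h0 : V s + π * R s ^ 2 * h s - (V t + π * R t ^ 2 * h t) = 0 := by
    simpa using this
  linarith
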